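/- There exist constants C > 0 and t₀ > 0 such that for every complex number s = σ + it with 1 ≤ σ ≤ 2 and t ≥ t₀, one has |ζ(s)| ≤ C · log t. -/

import Mathlib

open Complex Real Filter

/-- Derivative of `x ↦ x^(-s)` on the reals. -/
lemma aux_hasDerivAt_cpow_neg {s : ℂ} (hs0 : s ≠ 0) {x : ℝ} (hx : 0 < x) :
    HasDerivAt (fun y : ℝ => (y : ℂ) ^ (-s)) (-s * (x : ℂ) ^ (-s - 1)) x := by
  have hr : (-s - 1 : ℂ) ≠ -1 := by
    intro h; apply hs0; linear_combination -h
  have h := hasDerivAt_ofReal_cpow_const' hx.ne' hr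
  have h2 := h.const_mul (-s)
  have he : (fun y : ℝ => -s * ((y : ℂ) ^ (-s - 1 + 1) / (-s - 1 + 1))) =
      fun y : ℝ => (y : ℂ) ^ (-s) := by
    funext y
    have : (-s - 1 + 1 : ℂ) = -s := by ring
    rw [this]
    field_simp
  rwa [he] at h2

/-- Derivative of the antiderivative `G`. -/
lemma aux_hasDerivAt_G {s : ℂ} (hs1 : s ≠ 1) {x : ℝ} (hx : 0 < x) :
    HasDerivAt (fun y : ℝ => (y : ℂ) ^ (1 - s) / (1 - s)) ((x : ℂ) ^ (-s)) x := by
  have hr : (-s : ℂ) ≠ -1 := fun h => hs1 (by linear_combination -h)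
  have h := hasDerivAt_ofReal_cpow_const' hx.ne' hr
  have he : (fun y : ℝ => (y : ℂ) ^ (-s + 1) / (-s + 1)) =
      fun y : ℝ => (y : ℂ) ^ (1 - s) / (1 - s) := by
    funext y; rw [show (-s + 1 : ℂ) = 1 - s by ring]
  rwa [he] at h

/-- Key estimate: `a^(-s)` differs from `G(a+1) - G(a)` by at most `‖s‖/a²`. -/
lemma aux_key {s : ℂ} (h1 : 1 ≤ s.re) (hs0 : s ≠ 0) (hs1 : s ≠ 1) {a : ℝ} (ha : 1 ≤ a) :
    ‖(a : ℂ) ^ (-s) -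
      (((a + 1 : ℝ) : ℂ) ^ (1 - s) / (1 - s) - (a : ℂ) ^ (1 - s) / (1 - s))‖ ≤ ‖s‖ / a ^ 2 := by
  have ha0 : (0 : ℝ) < a := lt_of_lt_of_le one_pos ha
  set c : ℂ := (a : ℂ) ^ (-s) with hc
  have hCnn : 0 ≤ ‖s‖ / a ^ 2 := div_nonneg (norm_nonneg _) (by positivity)
  -- step 1 : the derivative of x ↦ x^(-s) is small on [a, a+1]
  have hbound : ∀ x ∈ Set.Icc a (a + 1), ‖(x : ℂ) ^ (-s) - c‖ ≤ ‖s‖ / a ^ 2 := by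
    intro x hx
    have hderivb : ∀ y ∈ Set.Icc a (a + 1), ‖-s * (y : ℂ) ^ (-s - 1)‖ ≤ ‖s‖ / a ^ 2 := by
      intro y hy
      have hy1 : (1 : ℝ) ≤ y := le_trans ha hy.1
      have hy0 : (0 : ℝ) < y := lt_of_lt_of_le one_pos hy1
      rw [norm_mul, norm_neg]
      have hn : ‖(y : ℂ) ^ (-s - 1)‖ = y ^ ((-s - 1).re) := by
        rw [Complex.norm_cpow_eq_rpow_re_of_pos hy0]
      have hre : (-s - 1).re = -(s.re + 1) := by simp; ring
      have hkey : y ^ (-(s.re + 1)) ≤ (a ^ 2)⁻¹ := by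
        rw [Real.rpow_neg hy0.le]
        apply inv_anti₀ (by positivity)
        calc a ^ 2 ≤ y ^ 2 := by gcongr; exact hy.1
          _ = y ^ (2 : ℝ) := by rw [← Real.rpow_natCast y 2]; norm_num
          _ ≤ y ^ (s.re + 1) := Real.rpow_le_rpow_of_exponent_le hy1 (by linarith)
      rw [hn, hre, div_eq_mul_inv]
      exact mul_le_mul_of_nonneg_left hkey (norm_nonneg _)
    have := (convex_Icc a (a + 1)).norm_image_sub_le_of_norm_hasDerivWithin_le
      (f := fun y : ℝ => (y : ℂ) ^ (-s)) (f' := fun y : ℝ => -s * (y : ℂ) ^ (-s - 1))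
      (fun y hy =>
        (aux_hasDerivAt_cpow_neg hs0 (lt_of_lt_of_le ha0 hy.1)).hasDerivWithinAt)
      hderivb (Set.left_mem_Icc.mpr (by linarith)) hx
    calc ‖(x : ℂ) ^ (-s) - c‖ ≤ ‖s‖ / a ^ 2 * ‖x - a‖ := this
      _ ≤ ‖s‖ / a ^ 2 * 1 := by
          apply mul_le_mul_of_nonneg_left _ hCnn
          rw [Real.norm_eq_abs, _root_.abs_of_nonneg (by linarith [hx.1])]
          linarith [hx.2]
      _ = ‖s‖ / a ^ 2 := mul_one _
  -- step 2 : apply MVT to x ↦ x * c - G x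
  have h2 : ∀ x ∈ Set.Icc a (a + 1),
      HasDerivWithinAt (fun y : ℝ => (y : ℂ) * c - (y : ℂ) ^ (1 - s) / (1 - s))
        (c - (x : ℂ) ^ (-s)) (Set.Icc a (a + 1)) x := by
    intro x hx
    have hx0 : (0 : ℝ) < x := lt_of_lt_of_le ha0 hx.1
    have d1 : HasDerivAt (fun y : ℝ => (y : ℂ) * c) c x := by
      simpa using (Complex.ofRealCLM.hasDerivAt (x := x)).mul_const c
    exact ((d1.sub (aux_hasDerivAt_G hs1 hx0)).hasDerivWithinAt)
  have h3 := (convex_Icc a (a + 1)).norm_image_sub_le_of_norm_hasDerivWithin_le h2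
    (fun x hx => by rw [norm_sub_rev]; exact hbound x hx)
    (Set.left_mem_Icc.mpr (by linarith)) (Set.right_mem_Icc.mpr (by linarith))
  have heq : (((a + 1 : ℝ)) : ℂ) * c - ((a + 1 : ℝ) : ℂ) ^ (1 - s) / (1 - s) -
      ((a : ℂ) * c - (a : ℂ) ^ (1 - s) / (1 - s)) =
      c - (((a + 1 : ℝ) : ℂ) ^ (1 - s) / (1 - s) - (a : ℂ) ^ (1 - s) / (1 - s)) := by
    push_cast
    ring
  rw [heq] at h3
  calc ‖c - (((a + 1 : ℝ) : ℂ) ^ (1 - s) / (1 - s) - (a : ℂ) ^ (1 - s) / (1 - s))‖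
      ≤ ‖s‖ / a ^ 2 * ‖(a + 1) - a‖ := h3
    _ = ‖s‖ / a ^ 2 := by simp

lemma aux_strip {s : ℂ} (h1 : 1 < s.re) (h2 : s.re ≤ 2) (ht : 3 ≤ s.im) :
    ‖riemannZeta s‖ ≤ 4 + Real.log s.im := by
  have hs0 : s ≠ 0 := by intro h; rw [h] at ht; simp at ht; linarith
  have hs1 : s ≠ 1 := by intro h; rw [h] at ht; simp at ht; linarith
  set t : ℝ := s.im with htdef
  have ht0 : (0 : ℝ) < t := by linarith
  set N : ℕ := ⌊t⌋₊ with hNdef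
  have hN3 : 3 ≤ N := Nat.le_floor (by exact_mod_cast ht)
  have hNt : (N : ℝ) ≤ t := Nat.floor_le ht0.le
  have htN : t < N + 1 := Nat.lt_floor_add_one t
  have hN1 : (1 : ℝ) ≤ (N : ℝ) := by exact_mod_cast Nat.one_le_iff_ne_zero.mpr (by omega)
  have hN0 : (0 : ℝ) < (N : ℝ) := by linarith
  -- the series
  set f : ℕ → ℂ := fun n => 1 / (n : ℂ) ^ s with hfdef
  have hsum : Summable f := by
    rw [hfdef]
    exact Complex.summable_one_div_nat_cpow.mpr h1
  have hzeta : riemannZeta s = (∑ i ∈ Finset.range (N + 1), f i) + ∑' k, f (k + (N + 1)) := by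
    rw [zeta_eq_tsum_one_div_nat_cpow h1, ← hsum.sum_add_tsum_nat_add (N + 1)]
  -- head estimate
  have hf_eq : ∀ n : ℕ, f n = (n : ℂ) ^ (-s) := by
    intro n; rw [hfdef]; simp [Complex.cpow_neg, one_div]
  have head : ‖∑ i ∈ Finset.range (N + 1), f i‖ ≤ 1 + Real.log t := by
    have hb : ∀ i : ℕ, ‖f (i + 1)‖ ≤ ((i + 1 : ℕ) : ℝ)⁻¹ := by
      intro i
      rw [hfdef]
      simp only [norm_div, norm_one]
      rw [Complex.norm_natCast_cpow_of_pos (Nat.succ_pos i)]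
      rw [one_div]
      apply inv_anti₀ (by positivity)
      calc ((i + 1 : ℕ) : ℝ) = ((i + 1 : ℕ) : ℝ) ^ (1 : ℝ) := by rw [Real.rpow_one]
        _ ≤ ((i + 1 : ℕ) : ℝ) ^ s.re := Real.rpow_le_rpow_of_exponent_le
            (by exact_mod_cast Nat.one_le_iff_ne_zero.mpr (Nat.succ_ne_zero i)) h1.le
    calc ‖∑ i ∈ Finset.range (N + 1), f i‖ ≤ ∑ i ∈ Finset.range (N + 1), ‖f i‖ :=
          norm_sum_le _ _
      _ = ∑ i ∈ Finset.range N, ‖f (i + 1)‖ + ‖f 0‖ := Finset.sum_range_succ' _ _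
      _ = ∑ i ∈ Finset.range N, ‖f (i + 1)‖ := by
          rw [hfdef]; simp [Complex.zero_cpow hs0]
      _ ≤ ∑ i ∈ Finset.range N, ((i + 1 : ℕ) : ℝ)⁻¹ :=
          Finset.sum_le_sum fun i _ => hb i
      _ = ((harmonic N : ℚ) : ℝ) := by
          rw [harmonic]; push_cast; rfl
      _ ≤ 1 + Real.log N := harmonic_le_one_add_log N
      _ ≤ 1 + Real.log t := by
          have := Real.log_le_log hN0 hNt
          linarith
  -- tail estimate
  set G : ℝ → ℂ := fun x => (x : ℂ) ^ (1 - s) / (1 - s) with hGdef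
  set u : ℕ → ℂ := fun k => G ((k + N + 1 : ℕ) : ℝ) with hudef
  set D : ℕ → ℂ := fun k => u (k + 1) - u k with hDdef
  set e : ℕ → ℂ := fun k => f (k + (N + 1)) - D k with hedef
  have he_bound : ∀ k : ℕ, ‖e k‖ ≤ ‖s‖ / ((k + N + 1 : ℕ) : ℝ) ^ 2 := by
    intro k
    have ha : (1 : ℝ) ≤ ((k + N + 1 : ℕ) : ℝ) := by
      exact_mod_cast Nat.one_le_iff_ne_zero.mpr (by omega)
    have := aux_key h1.le hs0 hs1 ha
    simp only [hedef, hDdef, hudef, hGdef, hf_eq]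
    convert this using 3 <;> push_cast <;> ring_nf
  have hmaj : Summable (fun k : ℕ => ‖s‖ * (((k + 1 : ℕ) : ℝ) ^ 2)⁻¹) := by
    apply Summable.mul_left
    have h := (Real.summable_one_div_nat_pow (p := 2)).mpr (by norm_num)
    simpa [one_div] using (summable_nat_add_iff 1).mpr h
  have he_sum : Summable e := by
    apply Summable.of_norm_bounded hmaj
    intro k
    refine (he_bound k).trans ?_
    rw [div_eq_mul_inv]
    apply mul_le_mul_of_nonneg_left _ (norm_nonneg _)
    apply inv_anti₀ (by positivity)
    have : ((k + 1 : ℕ) : ℝ) ≤ ((k + N + 1 : ℕ) : ℝ) := by exact_mod_cast by omega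
    gcongr
  have hfs_sum : Summable (fun k => f (k + (N + 1))) := (summable_nat_add_iff (N + 1)).mpr hsum
  have hD_sum : Summable D := by
    have : D = fun k => f (k + (N + 1)) - e k := by
      funext k; rw [hedef]; ring
    rw [this]
    exact hfs_sum.sub he_sum
  -- telescoping
  have hu_tendsto : Filter.Tendsto u Filter.atTop (nhds 0) := by
    apply squeeze_zero_norm
      (a := fun k : ℕ => ((k + N + 1 : ℕ) : ℝ) ^ (1 - s.re) * ‖(1 - s)‖⁻¹)
    · intro k
      apply le_of_eq
      have hk0 : (0 : ℝ) < ((k + N + 1 : ℕ) : ℝ) := by positivity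
      rw [hudef, hGdef]
      simp only [norm_div]
      rw [Complex.norm_cpow_eq_rpow_re_of_pos hk0]
      rw [div_eq_mul_inv]
      congr 1
    · have h1' : Filter.Tendsto (fun x : ℝ => x ^ (1 - s.re)) Filter.atTop (nhds 0) :=
        by simpa [neg_sub] using tendsto_rpow_neg_atTop (by linarith : (0:ℝ) < s.re - 1)
      have h2' : Filter.Tendsto (fun k : ℕ => ((k + N + 1 : ℕ) : ℝ)) Filter.atTop Filter.atTop := by
        apply Filter.tendsto_atTop_mono (fun k : ℕ => by exact_mod_cast Nat.le_add_right k (N + 1) : ∀ k : ℕ, (k : ℝ) ≤ ((k + N + 1 : ℕ) : ℝ))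
        exact tendsto_natCast_atTop_atTop
      have := (h1'.comp h2').mul_const ‖(1 - s)‖⁻¹
      simpa using this
  have hD_hasSum : HasSum D (-(u 0)) := by
    have hps : ∀ M : ℕ, ∑ k ∈ Finset.range M, D k = u M - u 0 := fun M =>
      Finset.sum_range_sub u M
    have htend : Filter.Tendsto (fun M => ∑ k ∈ Finset.range M, D k) Filter.atTop
        (nhds (0 - u 0)) := by
      simp only [hps]
      exact hu_tendsto.sub_const (u 0)
    have := hD_sum.hasSum
    have h2' := this.tendsto_sum_nat
    rw [zero_sub] at htend
    rwa [tendsto_nhds_unique h2' htend] at this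
  -- sum of 1/(k+N+1)^2 ≤ 1/N via telescoping
  set v : ℕ → ℝ := fun k => (((k + N : ℕ) : ℝ))⁻¹ with hvdef
  set w : ℕ → ℝ := fun k => v k - v (k + 1) with hwdef
  have hvpos : ∀ k : ℕ, (0 : ℝ) < ((k + N : ℕ) : ℝ) := by
    intro k
    have : (0 : ℕ) < k + N := by omega
    exact_mod_cast this
  have hw_eq : ∀ k : ℕ, w k = (((k + N : ℕ) : ℝ) * ((k + 1 + N : ℕ) : ℝ))⁻¹ := by
    intro k
    rw [hwdef, hvdef]
    simp only
    rw [inv_sub_inv (hvpos k).ne' (hvpos (k + 1)).ne']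
    rw [show ((k + 1 + N : ℕ) : ℝ) - ((k + N : ℕ) : ℝ) = 1 by push_cast; ring, one_div]
  have hw_le : ∀ k : ℕ, (((k + N + 1 : ℕ) : ℝ) ^ 2)⁻¹ ≤ w k := by
    intro k
    rw [hw_eq k]
    apply inv_anti₀ (by positivity)
    push_cast
    nlinarith [Nat.cast_nonneg (α := ℝ) k, hN1]
  have hmaj2 : Summable (fun k : ℕ => (((k + 1 : ℕ) : ℝ) ^ 2)⁻¹) := by
    have h := (Real.summable_one_div_nat_pow (p := 2)).mpr (by norm_num)
    simpa [one_div] using (summable_nat_add_iff 1).mpr h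
  have hw_nonneg : ∀ k : ℕ, 0 ≤ w k := by
    intro k
    rw [hw_eq k]
    positivity
  have hw_sum : Summable w := by
    apply Summable.of_norm_bounded hmaj2
    intro k
    rw [Real.norm_eq_abs, _root_.abs_of_nonneg (hw_nonneg k), hw_eq k]
    apply inv_anti₀ (by positivity)
    push_cast
    nlinarith [Nat.cast_nonneg (α := ℝ) k, hN1]
  have hw_hasSum : HasSum w ((N : ℝ)⁻¹) := by
    have hps : ∀ M : ℕ, ∑ k ∈ Finset.range M, w k = v 0 - v M := fun M =>
      Finset.sum_range_sub' v M
    have hv_tendsto : Filter.Tendsto v Filter.atTop (nhds 0) := by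
      apply Filter.Tendsto.comp tendsto_inv_atTop_zero
      apply Filter.tendsto_atTop_mono
        (fun k : ℕ => by exact_mod_cast Nat.le_add_right k N : ∀ k : ℕ, (k : ℝ) ≤ ((k + N : ℕ) : ℝ))
      exact tendsto_natCast_atTop_atTop
    have htend : Filter.Tendsto (fun M => ∑ k ∈ Finset.range M, w k) Filter.atTop
        (nhds ((N : ℝ)⁻¹)) := by
      simp only [hps]
      have := (hv_tendsto.const_sub (v 0))
      simp only [sub_zero] at this
      have hv0 : v 0 = (N : ℝ)⁻¹ := by rw [hvdef]; norm_num
      simp only [hv0] at this ⊢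
      exact this
    have h2' := hw_sum.hasSum.tendsto_sum_nat
    rw [← tendsto_nhds_unique h2' htend]
    exact hw_sum.hasSum
  have hsq_sum : Summable (fun k : ℕ => (((k + N + 1 : ℕ) : ℝ) ^ 2)⁻¹) :=
    Summable.of_nonneg_of_le (fun k => by positivity) hw_le hw_sum
  have hsq_le : ∑' k : ℕ, (((k + N + 1 : ℕ) : ℝ) ^ 2)⁻¹ ≤ (N : ℝ)⁻¹ :=
    (Summable.tsum_le_tsum hw_le hsq_sum hw_sum).trans_eq hw_hasSum.tsum_eq
  -- assemble the tail bound
  have htail_eq : ∑' k, f (k + (N + 1)) = ∑' k, e k + -(u 0) := by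
    rw [← hD_hasSum.tsum_eq, ← Summable.tsum_add he_sum hD_sum]
    congr 1
    funext k
    rw [hedef]
    ring
  have henorm_sum : Summable (fun k => ‖e k‖) := by
    apply Summable.of_nonneg_of_le (fun k => norm_nonneg _) he_bound
    have := hsq_sum.mul_left ‖s‖
    simpa [div_eq_mul_inv] using this
  have hes_norm : ‖∑' k, e k‖ ≤ ‖s‖ * (N : ℝ)⁻¹ := by
    calc ‖∑' k, e k‖ ≤ ∑' k, ‖e k‖ := norm_tsum_le_tsum_norm henorm_sum
      _ ≤ ∑' k : ℕ, ‖s‖ * (((k + N + 1 : ℕ) : ℝ) ^ 2)⁻¹ := by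
          apply Summable.tsum_le_tsum _ henorm_sum (hsq_sum.mul_left ‖s‖)
          intro k
          rw [← div_eq_mul_inv]
          exact he_bound k
      _ = ‖s‖ * ∑' k : ℕ, (((k + N + 1 : ℕ) : ℝ) ^ 2)⁻¹ := tsum_mul_left
      _ ≤ ‖s‖ * (N : ℝ)⁻¹ := mul_le_mul_of_nonneg_left hsq_le (norm_nonneg _)
  have hu0 : ‖u 0‖ ≤ 1 := by
    rw [hudef, hGdef]
    simp only [norm_div]
    have hp : (0 : ℝ) < ((0 + N + 1 : ℕ) : ℝ) := by positivity
    rw [Complex.norm_cpow_eq_rpow_re_of_pos hp]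
    apply div_le_one_of_le₀
    · calc ((0 + N + 1 : ℕ) : ℝ) ^ ((1 - s).re) ≤ 1 := by
            apply Real.rpow_le_one_of_one_le_of_nonpos
            · exact_mod_cast Nat.one_le_iff_ne_zero.mpr (by omega)
            · simp [Complex.sub_re]; linarith
        _ ≤ ‖(1 : ℂ) - s‖ := by
            calc (1 : ℝ) ≤ t := by linarith
              _ = |(1 - s).im| := by
                  simp only [Complex.sub_im, Complex.one_im, zero_sub, abs_neg]
                  exact (_root_.abs_of_pos ht0).symm
              _ ≤ ‖(1 : ℂ) - s‖ := Complex.abs_im_le_norm _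
    · exact norm_nonneg _
  have hsnorm : ‖s‖ * (N : ℝ)⁻¹ ≤ 2 := by
    have h1' : ‖s‖ ≤ 2 + t := by
      refine (Complex.norm_le_abs_re_add_abs_im s).trans ?_
      have : |s.re| ≤ 2 := abs_le.mpr ⟨by linarith, h2⟩
      have h2'' : |s.im| = t := abs_of_pos ht0
      linarith
    rw [mul_inv_le_iff₀ hN0]
    have : (3 : ℝ) ≤ (N : ℝ) := by exact_mod_cast hN3
    linarith
  -- conclusion
  rw [hzeta]
  calc ‖(∑ i ∈ Finset.range (N + 1), f i) + ∑' k, f (k + (N + 1))‖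
      ≤ ‖∑ i ∈ Finset.range (N + 1), f i‖ + ‖∑' k, f (k + (N + 1))‖ := norm_add_le _ _
    _ ≤ (1 + Real.log t) + (‖∑' k, e k‖ + ‖u 0‖) := by
        apply add_le_add head
        rw [htail_eq]
        exact (norm_add_le _ _).trans (by rw [norm_neg])
    _ ≤ (1 + Real.log t) + (2 + 1) := by
        have := hes_norm.trans hsnorm
        linarith
    _ = 4 + Real.log t := by ring

lemma aux_log3 : (1 : ℝ) ≤ Real.log 3 := by
  rw [show (1 : ℝ) = Real.log (Real.exp 1) by rw [Real.log_exp]]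
  apply Real.log_le_log (Real.exp_pos 1)
  exact le_of_lt (lt_of_lt_of_le Real.exp_one_lt_d9 (by norm_num))

lemma aux_strip' {s : ℂ} (h1 : 1 < s.re) (h2 : s.re ≤ 2) (ht : 3 ≤ s.im) :
    ‖riemannZeta s‖ ≤ 5 * Real.log s.im := by
  have hlog : 1 ≤ Real.log s.im :=
    aux_log3.trans (Real.log_le_log (by norm_num) ht)
  have := aux_strip h1 h2 ht
  linarith

/-- Theorem 7, second case: `ζ(s) = O(log t)` in the strip `1 ≤ σ ≤ 2`, `t ≥ t₀`. -/
theorem zeta_bound_strip_one_two :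
    ∃ C : ℝ, 0 < C ∧ ∃ t₀ : ℝ, 0 < t₀ ∧
      ∀ s : ℂ, 1 ≤ s.re → s.re ≤ 2 → t₀ ≤ s.im →
        ‖riemannZeta s‖ ≤ C * Real.log s.im := by
  refine ⟨5, by norm_num, 3, by norm_num, fun s h1 h2 ht => ?_⟩
  rcases lt_or_eq_of_le h1 with h1' | h1'
  · exact aux_strip' h1' h2 ht
  · -- boundary case `re s = 1`, by continuity
    have hs1 : s ≠ 1 := by
      intro h; rw [h] at ht; simp at ht; linarith
    have hζ : ContinuousAt riemannZeta s := (differentiableAt_riemannZeta hs1).continuousAt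
    have hadd : Filter.Tendsto (fun ε : ℝ => s + (ε : ℂ)) (nhdsWithin 0 (Set.Ioi 0))
        (nhds s) := by
      have h' : Filter.Tendsto (fun ε : ℝ => s + (ε : ℂ)) (nhds 0) (nhds (s + ((0 : ℝ) : ℂ))) :=
        Filter.Tendsto.const_add s (Complex.continuous_ofReal.continuousAt)
      rw [Complex.ofReal_zero, add_zero] at h'
      exact h'.mono_left nhdsWithin_le_nhds
    have hcomp : Filter.Tendsto (fun ε : ℝ => ‖riemannZeta (s + ε)‖)
        (nhdsWithin 0 (Set.Ioi 0)) (nhds ‖riemannZeta s‖) :=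
      Filter.Tendsto.comp (continuous_norm.continuousAt)
        (Filter.Tendsto.comp (hζ : Filter.Tendsto riemannZeta (nhds s) (nhds (riemannZeta s))) hadd)
    apply le_of_tendsto hcomp
    filter_upwards [Ioo_mem_nhdsGT_of_mem (Set.left_mem_Ico.mpr one_pos)] with ε hε
    have him : (s + (ε : ℂ)).im = s.im := by simp
    have hre : (s + (ε : ℂ)).re = s.re + ε := by simp
    have hb := aux_strip' (s := s + (ε : ℂ))
      (by rw [hre, ← h1']; linarith [hε.1]) (by rw [hre, ← h1']; linarith [hε.2])
      (by rw [him]; exact ht)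
    rwa [him] at hb
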